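/- If Γ is an ordinary graph with node set [n], then every vertex of the inside-out polytope ([0,1]^n, H[Γ]) is an integer point; that is, every point of [0,1]^n that is an intersection point formed by hyperplanes of H[Γ] and facet hyperplanes of [0,1]^n lies in ℤ^n. -/
import Mathlib


open scoped Classical
open MeasureTheory

noncomputable section

/-- We model `ℝ^d` as `Fin d → ℝ`. -/
abbrev EucSp (d : ℕ) : Type := Fin d → ℝ

/-- An (affine, nondegenerate) hyperplane in `ℝ^d`: the solution set of a nontrivial
affine-linear equation. -/
def IsAffineHyperplane {d : ℕ} (h : Set (EucSp d)) : Prop :=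
  ∃ (a : EucSp d) (b : ℝ), a ≠ 0 ∧ h = {x : EucSp d | (∑ i, a i * x i) = b}

/-- The union of the hyperplanes of an arrangement. -/
def arrUnion {d : ℕ} (H : Finset (Set (EucSp d))) : Set (EucSp d) :=
  ⋃ h ∈ H, (h : Set (EucSp d))

/-- The flats of an arrangement: all nonempty intersections of subcollections
(the empty intersection being the whole space `ℝ^d`). -/
def flatsOf {d : ℕ} (H : Finset (Set (EucSp d))) : Finset (Set (EucSp d)) :=
  (H.powerset.image fun S => ⋂ h ∈ S, (h : Set (EucSp d))).filter fun u => u.Nonempty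

/-- `μ` is the Möbius function of the intersection poset of flats of `H`, ordered by
reverse inclusion (mimimum element `Set.univ`):  `μ a b` is defined whenever `b ⊆ a`
by the standard recursion `∑_{b ⊆ w ⊆ a} μ a w = δ_{a b}`. -/
def IsMobiusOf {d : ℕ} (H : Finset (Set (EucSp d)))
    (μ : Set (EucSp d) → Set (EucSp d) → ℤ) : Prop :=
  ∀ a ∈ flatsOf H, ∀ b ∈ flatsOf H, b ⊆ a →
    (∑ w ∈ (flatsOf H).filter fun w => b ⊆ w ∧ w ⊆ a, μ a w) = if a = b then 1 else 0

/-- A discrete (i.e. locally finite) set of points in `ℝ^d`. -/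
def LocallyFiniteSet {d : ℕ} (D : Set (EucSp d)) : Prop :=
  ∀ x : EucSp d, ∃ U ∈ nhds x, (D ∩ U).Finite

/-- The arrangement `H` is transverse to the convex set `C`: every flat meeting the closure
of `C` meets its relative interior, and `C` lies in no hyperplane of `H`. -/
def TransverseTo {d : ℕ} (H : Finset (Set (EucSp d))) (C : Set (EucSp d)) : Prop :=
  (∀ u ∈ flatsOf H, (u ∩ closure C).Nonempty → (u ∩ intrinsicInterior ℝ C).Nonempty) ∧
    ∀ h ∈ H, ¬ C ⊆ h

/-- The closed regions determined by the arrangement `H` inside the set `S`: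
topological closures of connected components of `S ∖ ⋃H`. -/
def closedRegionsOf {d : ℕ} (S : Set (EucSp d)) (H : Finset (Set (EucSp d))) :
    Set (Set (EucSp d)) :=
  {R | ∃ y ∈ S \ arrUnion H, R = closure (connectedComponentIn (S \ arrUnion H) y)}

/-- Multiplicity of a point: the number of closed regions (components taken inside `S`)
containing it, provided the point lies in `C`; otherwise `0`. -/
def multOf {d : ℕ} (C S : Set (EucSp d)) (H : Finset (Set (EucSp d))) (x : EucSp d) : ℕ :=
  if x ∈ C then {R | R ∈ closedRegionsOf S H ∧ x ∈ R}.ncard else 0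

/-- The dimension of a flat (an affine subspace), as the rank of its direction. -/
def flatDim {d : ℕ} (u : Set (EucSp d)) : ℕ := Module.finrank ℝ (vectorSpan ℝ u)


/-- The graphic hyperplane arrangement `H[Γ] = { x_i = x_j : ij ∈ E(Γ) }` in `ℝ^n`
(an edge is an unordered pair, possibly a loop, and loops give the degenerate
hyperplane `ℝ^n`). -/
def graphArrangement (n : ℕ) (E : Multiset (Sym2 (Fin n))) : Finset (Set (EucSp n)) :=
  E.toFinset.image fun e => {x : EucSp n | ∀ i j : Fin n, e = s(i, j) → x i = x j}

/-- The integer lattice `ℤ^n ⊆ ℝ^n`. -/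
def integerLattice (n : ℕ) : Set (EucSp n) := {x : EucSp n | ∀ i, ∃ k : ℤ, x i = (k : ℝ)}

/-- The unit cube `[0,1]^n`. -/
def unitCube (n : ℕ) : Set (EucSp n) := Set.pi Set.univ fun _ : Fin n => Set.Icc (0 : ℝ) 1

/-- The number of proper `c`-colorings of the graph with node set `[n]` and edge
multiset `E`, i.e. the chromatic polynomial evaluated at `c`. -/
def properColorings (n : ℕ) (E : Multiset (Sym2 (Fin n))) (c : ℕ) : ℕ :=
  Set.ncard {x : Fin n → Fin c | ∀ e ∈ E, ∀ i j : Fin n, e = s(i, j) → x i ≠ x j}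

/-- Lemma 5.3: the inside-out polytope `([0,1]^n, H[Γ])` of an ordinary
graph has integer vertices: every point of `[0,1]^n` cut out as the intersection of a
collection of hyperplanes of `H[Γ]` and facet hyperplanes of the cube lies in `ℤ^n`. -/
theorem statement11 (n : ℕ) (E : Multiset (Sym2 (Fin n))) :
    ∀ x : EucSp n, x ∈ unitCube n →
      ∀ S : Set (Set (EucSp n)),
        (∀ h ∈ S, h ∈ graphArrangement n E ∨
          ∃ i : Fin n, h = {y : EucSp n | y i = 0} ∨ h = {y : EucSp n | y i = 1}) →
        ⋂₀ S = {x} →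
        x ∈ integerLattice n := by
  intro x hx S hS hinter
  by_contra hnot
  simp only [integerLattice, Set.mem_setOf_eq, not_forall] at hnot
  obtain ⟨i, hi⟩ := hnot
  push_neg at hi
  have hi0 : x i ≠ 0 := fun h => hi 0 (by simp [h])
  have hi1 : x i ≠ 1 := fun h => hi 1 (by simp [h])
  set y : EucSp n := fun j => if x j = x i then x j + 1 else x j with hy
  have hxS : x ∈ ⋂₀ S := by rw [hinter]; exact rfl
  have hyS : y ∈ ⋂₀ S := by
    intro h hh
    have hxh : x ∈ h := hxS h hh
    rcases hS h hh with hg | ⟨k, hk | hk⟩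
    · simp only [graphArrangement, Finset.mem_image] at hg
      obtain ⟨e, _, rfl⟩ := hg
      intro a b hab
      have hab' : x a = x b := hxh a b hab
      simp only [hy]
      by_cases hc : x a = x i
      · rw [if_pos hc, if_pos (hab' ▸ hc), hab']
      · rw [if_neg hc, if_neg (hab' ▸ hc), hab']
    · subst hk
      have : x k = 0 := hxh
      show y k = 0
      simp only [hy]
      rw [if_neg (by rw [this]; exact fun h => hi0 h.symm), this]
    · subst hk
      have : x k = 1 := hxh
      show y k = 1
      simp only [hy]
      rw [if_neg (by rw [this]; exact fun h => hi1 h.symm), this]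
  rw [hinter] at hyS
  have : y i = x i := by rw [hyS]
  simp only [hy, if_pos rfl] at this
  linarith
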